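/- Every symmetric unitary matrix A (i.e., A ∈ U(n) with Aᵀ = A) can be written as A = O D Oᵀ where O is a real orthogonal matrix and D is a diagonal unitary matrix. -/

import Mathlib

open Matrix Module.End Module

lemma pair_eigenbasis {E : Type*} [NormedAddCommGroup E] [InnerProductSpace ℝ E]
    [FiniteDimensional ℝ E] {n : ℕ} (hn : finrank ℝ E = n)
    {S T : E →ₗ[ℝ] E} (hS : S.IsSymmetric) (hT : T.IsSymmetric) (hc : Commute S T) :
    ∃ (b : OrthonormalBasis (Fin n) ℝ E) (μ ν : Fin n → ℝ),
      ∀ i, S (b i) = μ i • b i ∧ T (b i) = ν i • b i := by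
  classical
  have hint := LinearMap.IsSymmetric.directSum_isInternal_of_commute hS hT hc
  have hofam := LinearMap.IsSymmetric.orthogonalFamily_eigenspace_inf_eigenspace hS hT
  set V : ℝ × ℝ → Submodule ℝ E :=
    fun i => eigenspace S i.2 ⊓ eigenspace T i.1 with hVdef
  have hind : iSupIndep V := hint.submodule_iSupIndep
  haveI : Fintype {p : ℝ × ℝ // V p ≠ ⊥} := hind.fintypeNeBotOfFiniteDimensional
  have hint' : DirectSum.IsInternal (fun p : {p : ℝ × ℝ // V p ≠ ⊥} => V p.val) := by
    rw [DirectSum.isInternal_submodule_iff_iSupIndep_and_iSup_eq_top]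
    exact ⟨hind.comp Subtype.val_injective,
      by rw [iSup_ne_bot_subtype]; exact hint.submodule_iSup_eq_top⟩
  have hofam' : OrthogonalFamily ℝ (fun p : {p : ℝ × ℝ // V p ≠ ⊥} => V p.val)
      (fun p => (V p.val).subtypeₗᵢ) := hofam.comp Subtype.val_injective
  set b := hint'.subordinateOrthonormalBasis hn hofam' with hbdef
  refine ⟨b, fun i => (hint'.subordinateOrthonormalBasisIndex hn i hofam').val.2,
    fun i => (hint'.subordinateOrthonormalBasisIndex hn i hofam').val.1, fun i => ?_⟩
  have hmem := hint'.subordinateOrthonormalBasis_subordinate hn i hofam'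
  exact ⟨mem_eigenspace_iff.mp hmem.1, mem_eigenspace_iff.mp hmem.2⟩

lemma simul_diag {n : ℕ} (X Y : Matrix (Fin n) (Fin n) ℝ) (hX : X.IsHermitian)
    (hY : Y.IsHermitian) (hXY : X * Y = Y * X) :
    ∃ (v : Fin n → (Fin n → ℝ)) (μ ν : Fin n → ℝ),
      (∀ i j, ∑ k, v i k * v j k = if i = j then 1 else 0) ∧
      (∀ i, X *ᵥ v i = μ i • v i) ∧ (∀ i, Y *ᵥ v i = ν i • v i) := by
  have hS : (Matrix.toEuclideanLin X).IsSymmetric := isHermitian_iff_isSymmetric.mp hX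
  have hT : (Matrix.toEuclideanLin Y).IsSymmetric := isHermitian_iff_isSymmetric.mp hY
  have hc : Commute (Matrix.toEuclideanLin X) (Matrix.toEuclideanLin Y) := by
    have h : ∀ M N : Matrix (Fin n) (Fin n) ℝ,
        Matrix.toEuclideanLin M * Matrix.toEuclideanLin N = Matrix.toEuclideanLin (M * N) := by
      intro M N
      ext x
      simp [Matrix.toEuclideanLin_apply, Matrix.mulVec_mulVec, Module.End.mul_apply]
    unfold Commute SemiconjBy
    rw [h, h, hXY]
  obtain ⟨b, μ, ν, hb⟩ := pair_eigenbasis finrank_euclideanSpace_fin hS hT hc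
  refine ⟨fun i => WithLp.equiv 2 (Fin n → ℝ) (b i), μ, ν, ?_, ?_, ?_⟩
  · intro i j
    have h := (orthonormal_iff_ite.mp b.orthonormal) i j
    rw [PiLp.inner_apply] at h
    simpa [mul_comm] using h
  · intro i
    have := congrArg (WithLp.equiv 2 (Fin n → ℝ)) (hb i).1
    rw [Matrix.toEuclideanLin_apply] at this
    simpa using this
  · intro i
    have := congrArg (WithLp.equiv 2 (Fin n → ℝ)) (hb i).2
    rw [Matrix.toEuclideanLin_apply] at this
    simpa using this

theorem symmetric_unitary_ODOt (n : ℕ) (A : Matrix (Fin n) (Fin n) ℂ)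
    (hA : Aᴴ * A = 1) (hsym : Aᵀ = A) :
    ∃ (O : Matrix (Fin n) (Fin n) ℝ) (d : Fin n → ℂ),
      Oᵀ * O = 1 ∧ (∀ i, ‖d i‖ = 1) ∧
      A = (O.map (Complex.ofReal)) * Matrix.diagonal d * (O.map (Complex.ofReal))ᵀ := by
  have hsym' : ∀ i j, A j i = A i j := fun i j => congrFun (congrFun hsym i) j
  have key : ∀ i j, ∑ k, (starRingEnd ℂ) (A k i) * A k j = if i = j then 1 else 0 := by
    intro i j
    have h := congrFun (congrFun hA i) j
    rw [Matrix.mul_apply, Matrix.one_apply] at h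
    simpa [Matrix.conjTranspose_apply] using h
  have hX : (A.map Complex.re).IsHermitian := by
    ext i j
    simp only [Matrix.conjTranspose_apply, Matrix.map_apply, star_trivial]
    rw [hsym' i j]
  have hY : (A.map Complex.im).IsHermitian := by
    ext i j
    simp only [Matrix.conjTranspose_apply, Matrix.map_apply, star_trivial]
    rw [hsym' i j]
  have hXX : A.map Complex.re * A.map Complex.re + A.map Complex.im * A.map Complex.im = 1 := by
    ext i j
    have h := congrArg Complex.re (key i j)
    rw [Complex.re_sum] at h
    simp only [Complex.mul_re, Complex.conj_re, Complex.conj_im, neg_mul, sub_neg_eq_add] at h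
    rw [Matrix.add_apply, Matrix.mul_apply, Matrix.mul_apply, Matrix.one_apply,
      ← Finset.sum_add_distrib]
    have hterm : ∀ k, (A.map Complex.re) i k * (A.map Complex.re) k j
        + (A.map Complex.im) i k * (A.map Complex.im) k j
        = (A k i).re * (A k j).re + (A k i).im * (A k j).im := by
      intro k
      simp only [Matrix.map_apply]
      rw [hsym' k i]
    rw [Finset.sum_congr rfl fun k _ => hterm k, h]
    simp [apply_ite Complex.re]
  have hcomm : A.map Complex.re * A.map Complex.im = A.map Complex.im * A.map Complex.re := by
    ext i j
    have h := congrArg Complex.im (key i j)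
    rw [Complex.im_sum] at h
    simp only [Complex.mul_im, Complex.conj_re, Complex.conj_im, neg_mul] at h
    rw [Matrix.mul_apply, Matrix.mul_apply, ← sub_eq_zero, ← Finset.sum_sub_distrib]
    have hterm : ∀ k, (A.map Complex.re) i k * (A.map Complex.im) k j
        - (A.map Complex.im) i k * (A.map Complex.re) k j
        = (A k i).re * (A k j).im + -((A k i).im * (A k j).re) := by
      intro k
      simp only [Matrix.map_apply]
      rw [hsym' k i]
      ring
    rw [Finset.sum_congr rfl fun k _ => hterm k, h]
    simp [apply_ite Complex.im]
  obtain ⟨v, μ, ν, hvo, hXv, hYv⟩ := simul_diag _ _ hX hY hcomm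
  set O : Matrix (Fin n) (Fin n) ℝ := Matrix.of fun k i => v i k with hOdef
  set d : Fin n → ℂ := fun i => ⟨μ i, ν i⟩ with hddef
  have hO : Oᵀ * O = 1 := by
    ext i j
    rw [Matrix.mul_apply, Matrix.one_apply]
    simpa only [hOdef, Matrix.transpose_apply, Matrix.of_apply] using hvo i j
  have hnorm : ∀ i, μ i * μ i + ν i * ν i = 1 := by
    intro i
    have h1 : (A.map Complex.re * A.map Complex.re
        + A.map Complex.im * A.map Complex.im) *ᵥ v i = v i := by
      rw [hXX, Matrix.one_mulVec]
    have h2 : (A.map Complex.re * A.map Complex.re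
        + A.map Complex.im * A.map Complex.im) *ᵥ v i = (μ i * μ i + ν i * ν i) • v i := by
      rw [Matrix.add_mulVec, ← Matrix.mulVec_mulVec, ← Matrix.mulVec_mulVec,
        hXv, Matrix.mulVec_smul, hXv, hYv, Matrix.mulVec_smul, hYv,
        smul_smul, smul_smul, ← add_smul]
    have hvne : v i ≠ 0 := by
      intro h0
      have h := hvo i i
      simp [h0] at h
    obtain ⟨k, hk⟩ := Function.ne_iff.mp hvne
    have hk' : v i k ≠ 0 := by simpa using hk
    have h3 := congrFun (h1.symm.trans h2) k
    simp only [Pi.smul_apply, smul_eq_mul] at h3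
    have h4 : (μ i * μ i + ν i * ν i) * v i k = 1 * v i k := by rw [one_mul]; exact h3.symm
    exact mul_right_cancel₀ hk' h4
  have habs : ∀ i, ‖d i‖ = 1 := by
    intro i
    rw [Complex.norm_def, Complex.normSq_mk, hnorm i, Real.sqrt_one]
  have hOc : (O.map Complex.ofReal)ᵀ * O.map Complex.ofReal = 1 := by
    rw [← Matrix.transpose_map]
    have : ∀ M N : Matrix (Fin n) (Fin n) ℝ,
        (M * N).map Complex.ofReal = M.map Complex.ofReal * N.map Complex.ofReal := fun M N =>
      Matrix.map_mul (f := Complex.ofRealHom)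
    rw [← this, hO]
    ext i j
    simp [Matrix.one_apply, apply_ite Complex.ofReal]
  have hOc2 : O.map Complex.ofReal * (O.map Complex.ofReal)ᵀ = 1 :=
    mul_eq_one_comm.mp hOc
  have hmain : A * O.map Complex.ofReal = O.map Complex.ofReal * Matrix.diagonal d := by
    ext k i
    rw [Matrix.mul_apply, Matrix.mul_diagonal]
    have hre := congrFun (hXv i) k
    have him := congrFun (hYv i) k
    simp only [Matrix.mulVec, dotProduct, Matrix.map_apply, Pi.smul_apply,
      smul_eq_mul] at hre him
    refine Complex.ext ?_ ?_
    · rw [Complex.re_sum]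
      simp only [Matrix.map_apply, hOdef, Matrix.of_apply, Complex.mul_re, Complex.ofReal_re,
        Complex.ofReal_im, mul_zero, sub_zero]
      rw [hre]
      ring
    · rw [Complex.im_sum]
      simp only [Matrix.map_apply, hOdef, Matrix.of_apply, Complex.mul_im, Complex.ofReal_re,
        Complex.ofReal_im, zero_mul, add_zero, mul_zero, zero_add]
      rw [him]
      ring
  refine ⟨O, d, hO, habs, ?_⟩
  calc A = A * (O.map Complex.ofReal * (O.map Complex.ofReal)ᵀ) := by rw [hOc2, mul_one]
    _ = (A * O.map Complex.ofReal) * (O.map Complex.ofReal)ᵀ := by rw [mul_assoc]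
    _ = O.map Complex.ofReal * Matrix.diagonal d * (O.map Complex.ofReal)ᵀ := by rw [hmain]
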